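/- If R is a right Kasch and right ℵ₀-injective ring, then every countably generated right ideal I of R is a right annihilator, i.e., I = r(l(I)). -/

import Mathlib

universe u

/-- A ring `R` is *right ℵ₀-injective* if every homomorphism of right `R`-modules
from a countably generated right ideal of `R` to `R` extends to a homomorphism of
right `R`-modules `R → R`. -/
def IsRightAleph0Injective (R : Type*) [Ring R] : Prop :=
  ∀ I : Submodule Rᵐᵒᵖ R,
    (∃ S : Set R, S.Countable ∧ Submodule.span Rᵐᵒᵖ S = I) →
    ∀ f : I →ₗ[Rᵐᵒᵖ] R, ∃ g : R →ₗ[Rᵐᵒᵖ] R, ∀ x : I, g (x : R) = f x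

/-- A ring `R` is *right Kasch* if every simple right `R`-module embeds into `R`
as a right `R`-module. -/
def IsRightKasch (R : Type u) [Ring R] : Prop :=
  ∀ (M : Type u) [AddCommGroup M] [Module Rᵐᵒᵖ M], IsSimpleModule Rᵐᵒᵖ M →
    ∃ f : M →ₗ[Rᵐᵒᵖ] R, Function.Injective f

/-- The left annihilator `l(X) = {r ∈ R : r * x = 0 for all x ∈ X}` of a subset
`X ⊆ R`, as a left ideal of `R`. -/
def leftAnn (R : Type*) [Ring R] (X : Set R) : Submodule R R where
  carrier := {r : R | ∀ x ∈ X, r * x = 0}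
  zero_mem' := fun x _ => zero_mul x
  add_mem' := fun {a b} ha hb x hx => by rw [add_mul, ha x hx, hb x hx, add_zero]
  smul_mem' := fun c r hr x hx => by
    simp only [Set.mem_setOf_eq, smul_eq_mul] at *
    rw [mul_assoc, hr x hx, mul_zero]

/-- The right annihilator `r(X) = {s ∈ R : x * s = 0 for all x ∈ X}` of a subset
`X ⊆ R`, as a right ideal of `R`. -/
def rightAnn (R : Type*) [Ring R] (X : Set R) : Submodule Rᵐᵒᵖ R where
  carrier := {s : R | ∀ x ∈ X, x * s = 0}
  zero_mem' := fun x _ => mul_zero x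
  add_mem' := fun {a b} ha hb x hx => by rw [mul_add, ha x hx, hb x hx, add_zero]
  smul_mem' := fun c s hs x hx => by
    simp only [Set.mem_setOf_eq, MulOpposite.smul_eq_mul_unop] at *
    rw [← mul_assoc, hs x hx, zero_mul]

/-- If `R` is right Kasch and right ℵ₀-injective, then every countably generated
right ideal `I` of `R` is a right annihilator: `I = r(l(I))`. -/
theorem countably_generated_right_ideal_is_annihilator (R : Type u) [Ring R]
    (hKasch : IsRightKasch R) (hR : IsRightAleph0Injective R)
    (I : Submodule Rᵐᵒᵖ R)
    (hI : ∃ S : Set R, S.Countable ∧ Submodule.span Rᵐᵒᵖ S = I) :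
    I = rightAnn R ((leftAnn R (I : Set R) : Submodule R R) : Set R) := by
  apply le_antisymm
  · intro x hx a ha
    exact ha x hx
  · intro b hb
    by_contra hbI
    -- the right ideal I + bR
    set I' : Submodule Rᵐᵒᵖ R := I ⊔ Submodule.span Rᵐᵒᵖ {b} with hI'def
    obtain ⟨S, hSc, hSspan⟩ := hI
    have hI'cg : ∃ S : Set R, S.Countable ∧ Submodule.span Rᵐᵒᵖ S = I' := by
      refine ⟨S ∪ {b}, hSc.union (Set.countable_singleton b), ?_⟩
      rw [Submodule.span_union, hSspan]
    have hbI' : b ∈ I' := Submodule.mem_sup_right (Submodule.mem_span_singleton_self b)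
    set bb : I' := ⟨b, hbI'⟩ with hbbdef
    -- the submodule of I' corresponding to I
    set N : Submodule Rᵐᵒᵖ I' := Submodule.comap I'.subtype I with hNdef
    set bbar : I' ⧸ N := N.mkQ bb with hbbar
    have hbbar_ne : bbar ≠ 0 := by
      simp only [hbbar, Submodule.mkQ_apply, ne_eq, Submodule.Quotient.mk_eq_zero]
      exact fun h => hbI h
    -- φ : R → I'/N, r ↦ bbar * r
    set φ : R →ₗ[Rᵐᵒᵖ] (I' ⧸ N) :=
      { toFun := fun r => (MulOpposite.op r) • bbar
        map_add' := fun x y => by rw [MulOpposite.op_add, add_smul]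
        map_smul' := fun c r => by
          dsimp only [RingHom.id_apply]
          rw [MulOpposite.smul_eq_mul_unop, MulOpposite.op_mul, MulOpposite.op_unop, mul_smul] }
      with hφdef
    have hφ1 : φ 1 = bbar := by
      show (MulOpposite.op (1:R)) • bbar = bbar
      rw [MulOpposite.op_one, one_smul]
    have hφsurj : Function.Surjective φ := by
      intro m
      obtain ⟨x, rfl⟩ := N.mkQ_surjective m
      obtain ⟨y, hy, z, hz, hyz⟩ := Submodule.mem_sup.mp x.2
      obtain ⟨c, hc⟩ := Submodule.mem_span_singleton.mp hz
      refine ⟨c.unop, ?_⟩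
      have hx : x = (⟨y, Submodule.mem_sup_left hy⟩ : I') + c • bb := by
        ext
        have hz' : b * MulOpposite.unop c = z := by
          rw [← hc, MulOpposite.smul_eq_mul_unop]
        simp only [hbbdef, Submodule.coe_add, SetLike.val_smul, MulOpposite.smul_eq_mul_unop]
        rw [hz', hyz]
      rw [hx]
      simp only [hφdef, LinearMap.coe_mk, AddHom.coe_mk, MulOpposite.op_unop, map_add]
      have : N.mkQ (⟨y, Submodule.mem_sup_left hy⟩ : I') = 0 := by
        rw [Submodule.mkQ_apply, Submodule.Quotient.mk_eq_zero]
        exact hy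
      rw [this, zero_add, map_smul, hbbar]
    -- find a maximal right ideal containing ker φ
    have hker_ne : LinearMap.ker φ ≠ ⊤ := by
      intro h
      have h1 : (1 : R) ∈ LinearMap.ker φ := h ▸ Submodule.mem_top
      rw [LinearMap.mem_ker, hφ1] at h1
      exact hbbar_ne h1
    haveI : IsCoatomic (Submodule Rᵐᵒᵖ R) := by
      apply CompleteLattice.coatomic_of_top_compact
      rw [← Submodule.fg_iff_compact]
      refine ⟨{1}, ?_⟩
      rw [eq_top_iff]
      intro r _
      rw [Finset.coe_singleton, Submodule.mem_span_singleton]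
      exact ⟨MulOpposite.op r, by simp [MulOpposite.smul_eq_mul_unop]⟩
    obtain ⟨K, hK, hleK⟩ :=
      (eq_top_or_exists_le_coatom (LinearMap.ker φ)).resolve_left hker_ne
    haveI : IsSimpleModule Rᵐᵒᵖ (R ⧸ K) := isSimpleModule_iff_isCoatom.mpr hK
    obtain ⟨ι, hι⟩ := hKasch (R ⧸ K) inferInstance
    -- build f : I' → R
    set e := LinearMap.quotKerEquivOfSurjective φ hφsurj with hedef
    set π : (I' ⧸ N) →ₗ[Rᵐᵒᵖ] (R ⧸ K) :=
      (Submodule.mapQ (LinearMap.ker φ) K LinearMap.id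
        (fun x hx => hleK hx)) ∘ₗ e.symm.toLinearMap with hπdef
    set f : I' →ₗ[Rᵐᵒᵖ] R := ι ∘ₗ π ∘ₗ N.mkQ with hfdef
    have hfI : ∀ x : I', (x : R) ∈ I → f x = 0 := by
      intro x hx
      have : N.mkQ x = 0 := by
        rw [Submodule.mkQ_apply, Submodule.Quotient.mk_eq_zero]
        exact hx
      simp [hfdef, this]
    have hesymm : e.symm bbar = Submodule.Quotient.mk (1 : R) := by
      apply e.injective
      rw [LinearEquiv.apply_symm_apply]
      have : e (Submodule.Quotient.mk (1 : R)) = φ 1 := rfl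
      rw [this, hφ1]
    have hfb : f bb ≠ 0 := by
      have hπb : π bbar = Submodule.Quotient.mk (1 : R) := by
        rw [hπdef]
        simp only [LinearMap.coe_comp, Function.comp_apply, LinearEquiv.coe_coe, hesymm]
        rw [Submodule.mapQ_apply, LinearMap.id_apply]
      have : f bb = ι (Submodule.Quotient.mk (1 : R)) := by
        rw [hfdef]
        simp only [LinearMap.coe_comp, Function.comp_apply, ← hbbar, hπb]
      rw [this]
      intro h
      have h1 : Submodule.Quotient.mk (1 : R) = (0 : R ⧸ K) := hι (by rwa [map_zero])
      rw [Submodule.Quotient.mk_eq_zero] at h1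
      exact hK.1 ((eq_top_iff).mpr fun r _ => by
        simpa [MulOpposite.smul_eq_mul_unop] using K.smul_mem (MulOpposite.op r) h1)
    -- extend f via ℵ₀-injectivity
    obtain ⟨g, hg⟩ := hR I' hI'cg f
    set a : R := g 1 with hadef
    have hga : ∀ x : R, g x = a * x := by
      intro x
      have : x = (MulOpposite.op x) • (1 : R) := by
        simp [MulOpposite.smul_eq_mul_unop]
      calc g x = g ((MulOpposite.op x) • (1 : R)) := by rw [← this]
        _ = (MulOpposite.op x) • g 1 := map_smul g _ _
        _ = a * x := by rw [MulOpposite.smul_eq_mul_unop, MulOpposite.unop_op, hadef]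
    have haI : a ∈ leftAnn R (I : Set R) := by
      intro x hx
      rw [← hga x]
      have := hg ⟨x, Submodule.mem_sup_left hx⟩
      rw [this, hfI ⟨x, Submodule.mem_sup_left hx⟩ hx]
    have hab : a * b = 0 := hb a haI
    rw [← hga b] at hab
    have := hg bb
    rw [hbbdef] at this
    exact hfb (this ▸ hab)
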